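/- For integers k > l ≥ 1 and c_1, …, c_l with c_l > 2, one has E^♭_k(c_1,…,c_l, 2^{(k−l)})_q − E^♭_{k−1}(c_1,…,c_l, 2^{(k−l−1)})_q = E^♯_{k+1}(c_1,…,c_l, 2^{(k−l+1)})_q − E^♯_k(c_1,…,c_l, 2^{(k−l)})_q, where 2^{(j)} denotes j consecutive entries equal to 2. -/

import Mathlib

noncomputable section

/-- The field ℚ(q) of rational functions over ℚ. -/
abbrev K : Type := RatFunc ℚ

/-- The variable q. -/
def q : K := RatFunc.X

/-- Right q-integer `[n]^♯` with deformation parameter `x`. -/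
def qsX (x : K) (n : ℤ) : K := (1 - x ^ n) / (1 - x)

/-- Left q-integer `[n]^♭` with deformation parameter `x`. -/
def qfX (x : K) (n : ℤ) : K := (1 - x ^ (n - 1) + x ^ n - x ^ (n + 1)) / (1 - x)

/-- Right q-integer `[n]^♯_q`. -/
def qs (n : ℤ) : K := qsX q n

/-- Left q-integer `[n]^♭_q`. -/
def qf (n : ℤ) : K := qfX q n

/-- Right q-deformed Euler continuant `E^♯` (first-row expansion of the
tridiagonal determinant), with parameter `x`. -/
def EsharpX (x : K) : List ℤ → K
  | [] => 1
  | [c] => qsX x c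
  | c :: d :: rest => qsX x c * EsharpX x (d :: rest) - x ^ (c - 1) * EsharpX x rest

/-- Left q-deformed Euler continuant `E^♭` (first-row expansion of the
tridiagonal determinant whose (k,k) entry is the left q-integer), with parameter `x`. -/
def EflatX (x : K) : List ℤ → K
  | [] => 1
  | [c] => qfX x c
  | c :: d :: rest => qsX x c * EflatX x (d :: rest) - x ^ (c - 1) * EflatX x rest

def Esharp (L : List ℤ) : K := EsharpX q L

def Eflat (L : List ℤ) : K := EflatX q L

/-- `E^♯_{j-1}(d_2,…,d_j)` for the input list `(d_1,…,d_j)`, with the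
convention `E^♯_{-1}() = 0` when the list is empty. -/
def EsharpD : List ℤ → K
  | [] => 0
  | _ :: rest => Esharp rest

/-- `E^♭_{j-1}(d_2,…,d_j)` for the input list `(d_1,…,d_j)`, with the
convention `E^♭_{-1}() = 1 - q` when the list is empty. -/
def EflatD : List ℤ → K
  | [] => 1 - q
  | _ :: rest => Eflat rest

/-- Left q-deformed negative continued fraction `[[c_1,…,c_k]]^♭_q`. -/
def nflat : List ℤ → K
  | [] => 0
  | [c] => qf c
  | c :: d :: rest => qs c - q ^ (c - 1) / nflat (d :: rest)

/-- Right q-deformed negative continued fraction `[[c_1,…,c_k]]^♯_q`. -/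
def nsharp : List ℤ → K
  | [] => 0
  | [c] => qs c
  | c :: d :: rest => qs c - q ^ (c - 1) / nsharp (d :: rest)

/-- Left q-deformed regular continued fraction, with alternating parameter `x`, `x⁻¹`. -/
def regFlatX : K → List ℤ → K
  | _, [] => 0
  | x, [a] => qfX x a
  | x, a :: d :: rest => qsX x a + x ^ a / regFlatX x⁻¹ (d :: rest)

/-- Left q-deformed regular continued fraction `[a_1,…,a_{2m}]^♭_q`. -/
def regFlat (L : List ℤ) : K := regFlatX q L

/-- Classical negative continued fraction `[[c_1,…,c_k]] ∈ ℚ`. -/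
def negCF : List ℤ → ℚ
  | [] => 0
  | [c] => c
  | c :: d :: rest => c - 1 / negCF (d :: rest)

/-- Classical regular continued fraction `[a_1,…,a_{2m}] ∈ ℚ`. -/
def regCF : List ℤ → ℚ
  | [] => 0
  | [a] => a
  | a :: d :: rest => a + 1 / regCF (d :: rest)

/-- The matrix σ_{1,q} as an invertible 2×2 matrix over ℚ(q). -/
def σ1 : (Matrix (Fin 2) (Fin 2) K)ˣ where
  val := !![q⁻¹, -q⁻¹; 0, 1]
  inv := !![q, 1; 0, 1]
  val_inv := by
    have hq : (q : K) ≠ 0 := RatFunc.X_ne_zero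
    ext i j
    fin_cases i <;> fin_cases j <;>
      simp [Matrix.mul_apply, Fin.sum_univ_two, inv_mul_cancel₀ hq]
  inv_val := by
    have hq : (q : K) ≠ 0 := RatFunc.X_ne_zero
    ext i j
    fin_cases i <;> fin_cases j <;>
      simp [Matrix.mul_apply, Fin.sum_univ_two, mul_inv_cancel₀ hq]

/-- The matrix σ_{2,q} as an invertible 2×2 matrix over ℚ(q). -/
def σ2 : (Matrix (Fin 2) (Fin 2) K)ˣ where
  val := !![1, 0; 1, q⁻¹]
  inv := !![1, 0; -q, q]
  val_inv := by
    have hq : (q : K) ≠ 0 := RatFunc.X_ne_zero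
    ext i j
    fin_cases i <;> fin_cases j <;>
      simp [Matrix.mul_apply, Fin.sum_univ_two, inv_mul_cancel₀ hq]
  inv_val := by
    have hq : (q : K) ≠ 0 := RatFunc.X_ne_zero
    ext i j
    fin_cases i <;> fin_cases j <;>
      simp [Matrix.mul_apply, Fin.sum_univ_two, mul_inv_cancel₀ hq]

/-- The matrix S_q as an invertible 2×2 matrix over ℚ(q). -/
def Sq : (Matrix (Fin 2) (Fin 2) K)ˣ where
  val := !![0, -q⁻¹; 1, 0]
  inv := !![0, 1; -q, 0]
  val_inv := by
    have hq : (q : K) ≠ 0 := RatFunc.X_ne_zero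
    ext i j
    fin_cases i <;> fin_cases j <;>
      simp [Matrix.mul_apply, Fin.sum_univ_two, inv_mul_cancel₀ hq]
  inv_val := by
    have hq : (q : K) ≠ 0 := RatFunc.X_ne_zero
    ext i j
    fin_cases i <;> fin_cases j <;>
      simp [Matrix.mul_apply, Fin.sum_univ_two, mul_inv_cancel₀ hq]

/-- The product σ_{1,q}^{-c_1}·S_q·σ_{1,q}^{-c_2}·S_q⋯σ_{1,q}^{-c_k}·S_q. -/
def prodCS : List ℤ → (Matrix (Fin 2) (Fin 2) K)ˣ
  | [] => 1
  | c :: rest => σ1 ^ (-c) * Sq * prodCS rest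

/-- The product σ_{1,q}^{-a_1}·σ_{2,q}^{a_2}⋯σ_{1,q}^{-a_{2m-1}}·σ_{2,q}^{a_{2m}}. -/
def prodReg : List ℤ → (Matrix (Fin 2) (Fin 2) K)ˣ
  | [] => 1
  | [a] => σ1 ^ (-a)
  | a :: b :: rest => σ1 ^ (-a) * σ2 ^ b * prodReg rest

/-- The sum a_2 + a_4 + ⋯ of the even-indexed entries. -/
def evenSum : List ℤ → ℤ
  | [] => 0
  | [_] => 0
  | _ :: b :: rest => b + evenSum rest

/-- Möbius action of a 2×2 matrix on ℚ(q). -/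
def mobius (A : Matrix (Fin 2) (Fin 2) K) (x : K) : K :=
  (A 0 0 * x + A 0 1) / (A 1 0 * x + A 1 1)


lemma aux_hq0 : q ≠ 0 := RatFunc.X_ne_zero

lemma aux_hq1 : (1 : K) - q ≠ 0 := by
  rw [sub_ne_zero]
  intro h
  have := congrArg (RatFunc.eval (RingHom.id ℚ) 0) h
  simp [q, RatFunc.eval] at this

lemma aux_qf_eq (c : ℤ) : qfX q c = qsX q c - q ^ (c - 1) * (1 - q) := by
  have hc1 : q ^ (c - 1) = q ^ c / q := by rw [zpow_sub₀ aux_hq0, zpow_one]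
  have hc2 : q ^ (c + 1) = q ^ c * q := by rw [zpow_add₀ aux_hq0, zpow_one]
  rw [qfX, qsX, hc2, hc1]
  generalize q ^ c = P
  field_simp [aux_hq0, aux_hq1]
  ring

lemma aux_qs2 : qsX q 2 = 1 + q := by
  rw [qsX, div_eq_iff aux_hq1]
  have : q ^ (2 : ℤ) = q * q := by
    rw [show (2 : ℤ) = 1 + 1 from rfl, zpow_add₀ aux_hq0, zpow_one]
  rw [this]; ring

theorem aux_lem2 (b c : ℤ) : ∀ L : List ℤ,
    EsharpX q (L ++ [b, c]) = qsX q c * EsharpX q (L ++ [b]) - q ^ (b - 1) * EsharpX q L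
  | [] => by simp only [List.nil_append, EsharpX]; ring
  | [a] => by simp only [List.cons_append, List.nil_append, EsharpX]; ring
  | a :: a' :: L => by
      have h1 := aux_lem2 b c (a' :: L)
      have h2 := aux_lem2 b c L
      simp only [List.cons_append] at h1 h2 ⊢
      simp only [EsharpX]; rw [h1, h2]
      ring

theorem aux_lem1 (c : ℤ) : ∀ L : List ℤ,
    EflatX q (L ++ [c]) = EsharpX q (L ++ [c]) - q ^ (c - 1) * (1 - q) * EsharpX q L
  | [] => by simp only [List.nil_append, EflatX, EsharpX, aux_qf_eq]; ring
  | [a] => by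
      simp only [List.cons_append, List.nil_append, EflatX, EsharpX, aux_qf_eq]; ring
  | a :: a' :: L => by
      have h1 := aux_lem1 c (a' :: L)
      have h2 := aux_lem1 c L
      simp only [List.cons_append] at h1 h2 ⊢
      simp only [EflatX, EsharpX]; rw [h1, h2]
      ring

theorem aux_key (Bl : List ℤ) :
    EflatX q (Bl ++ [2, 2]) - EflatX q (Bl ++ [2])
      = EsharpX q (Bl ++ [2, 2, 2]) - EsharpX q (Bl ++ [2, 2]) := by
  have A1 := aux_lem1 2 (Bl ++ [2])
  have A0 := aux_lem1 2 Bl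
  have C3 := aux_lem2 2 2 (Bl ++ [2])
  have C2 := aux_lem2 2 2 Bl
  simp only [List.append_assoc, List.cons_append, List.nil_append] at A1 C3 ⊢
  simp only [show ((2:ℤ) - 1) = 1 by norm_num, zpow_one] at A1 A0 C3 C2
  rw [A1, A0, C3, C2, aux_qs2]
  ring

/-- for k > l ≥ 1 (so `n = k - l ≥ 1`),
E^♭_k(c_1,…,c_l,2^{(k−l)}) − E^♭_{k−1}(c_1,…,c_l,2^{(k−l−1)})
  = E^♯_{k+1}(c_1,…,c_l,2^{(k−l+1)}) − E^♯_k(c_1,…,c_l,2^{(k−l)}). -/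
theorem Eflat_diff_eq_Esharp_diff (cs : List ℤ) (cl : ℤ) (hcl : 2 < cl)
    (n : ℕ) (hn : 1 ≤ n) :
    Eflat ((cs ++ [cl]) ++ List.replicate n 2)
        - Eflat ((cs ++ [cl]) ++ List.replicate (n - 1) 2)
      = Esharp ((cs ++ [cl]) ++ List.replicate (n + 1) 2)
        - Esharp ((cs ++ [cl]) ++ List.replicate n 2) := by
  match n, hn with
  | 1, _ =>
    have A := aux_lem1 2 (cs ++ [cl])
    have B := aux_lem1 cl cs
    have Cr := aux_lem2 2 2 (cs ++ [cl])
    have Dr := aux_lem2 cl 2 cs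
    simp only [Eflat, Esharp, List.replicate, List.append_assoc, List.cons_append,
      List.nil_append, List.append_nil, Nat.sub_self] at A B Cr Dr ⊢
    simp only [show ((2:ℤ) - 1) = 1 by norm_num, zpow_one] at A Cr
    rw [A, B, Cr, Dr, aux_qs2]
    ring
  | (m+2), _ =>
    have h1 : (cs ++ [cl]) ++ List.replicate (m+2-1) 2
        = ((cs ++ [cl]) ++ List.replicate m 2) ++ [2] := by
      simp [List.replicate_succ', List.append_assoc]
    have h2 : (cs ++ [cl]) ++ List.replicate (m+2) 2
        = ((cs ++ [cl]) ++ List.replicate m 2) ++ [2, 2] := by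
      simp [List.replicate_succ', List.append_assoc]
    have h3 : (cs ++ [cl]) ++ List.replicate (m+2+1) 2
        = ((cs ++ [cl]) ++ List.replicate m 2) ++ [2, 2, 2] := by
      simp [List.replicate_succ', List.append_assoc]
    rw [Eflat, Eflat, Esharp, Esharp, h1, h2, h3]
    exact aux_key _
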